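/- arXiv:1707.02007 — 6 statements merged into one kernel-verified Lean document; each statement's English description precedes it below -/
import Mathlib

section
/- (Truncated V-fractional variation of constants, pure-derivative case.) Let n ≥ 0 be an integer, s > 0, and let f : (0,∞) → ℝ be continuous. Define y(t) = (1/n!) ∫_s^t ((t^α − τ^α)/(λα))^n f(τ) dωτ for t > 0. Then y is (n+1) times α-differentiable, D_α^{n+1} y(t) = f(t) for all t > 0, and D_α^j y(s) = 0 for every 0 ≤ j ≤ n. -/
open Real Set MeasureTheory Filter

noncomputable def poch (x y : ℝ) : ℝ := Real.Gamma (x + y) / Real.Gamma x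

noncomputable def vlam (γ β ρ δ p q : ℝ) : ℝ :=
  (Real.Gamma β * poch ρ q) / (Real.Gamma (γ + β) * poch δ p)

/-- Truncated V-fractional derivative `D_α f t = λ t^(1-α) f' t`. -/
noncomputable def Dal (γ β ρ δ p q α : ℝ) (f : ℝ → ℝ) : ℝ → ℝ :=
  fun t => vlam γ β ρ δ p q * t ^ (1 - α) * deriv f t

/-- `f` is `k` times α-differentiable. -/
def alphaDiff (γ β ρ δ p q α : ℝ) (k : ℕ) (f : ℝ → ℝ) : Prop :=
  ∀ j < k, DifferentiableOn ℝ ((Dal γ β ρ δ p q α)^[j] f) (Set.Ioi 0)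

/-- V-fractional integral `∫_a^b f dω = λ⁻¹ ∫_a^b f x · x^(α-1) dx`. -/
noncomputable def VInt (γ β ρ δ p q α : ℝ) (a b : ℝ) (f : ℝ → ℝ) : ℝ :=
  (vlam γ β ρ δ p q)⁻¹ * ∫ x in a..b, f x * x ^ (α - 1)

/-- Truncated V-fractional Taylor remainder with `m` terms; `R_{n,f} = Rtay (n+1)`. -/
noncomputable def Rtay (γ β ρ δ p q α : ℝ) (m : ℕ) (f : ℝ → ℝ) (t s : ℝ) : ℝ :=
  f s - ∑ k ∈ Finset.range m,
    ((Dal γ β ρ δ p q α)^[k] f t / (Nat.factorial k : ℝ)) *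
      ((s ^ α - t ^ α) / (vlam γ β ρ δ p q * α)) ^ k

/-! ### Auxiliary machinery -/

noncomputable def auxI (α s : ℝ) (f : ℝ → ℝ) (j : ℕ) (t : ℝ) : ℝ :=
  ∫ x in s..t, (-(x ^ α)) ^ j * (f x * x ^ (α - 1))

noncomputable def auxS (α s : ℝ) (f : ℝ → ℝ) (m : ℕ) (t : ℝ) : ℝ :=
  ∑ i ∈ Finset.range (m + 1),
    (m.choose i : ℝ) * t ^ (α * i) * auxI α s f (m - i) t

noncomputable def auxY (L α s : ℝ) (f : ℝ → ℝ) (m : ℕ) (t : ℝ) : ℝ :=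
  ((m.factorial : ℝ))⁻¹ *
    (L⁻¹ * ∫ x in s..t, ((t ^ α - x ^ α) / (L * α)) ^ m * f x * x ^ (α - 1))

lemma contg (α : ℝ) {f : ℝ → ℝ} (hf : ContinuousOn f (Set.Ioi 0)) :
    ContinuousOn (fun x : ℝ => f x * x ^ (α - 1)) (Set.Ioi 0) :=
  hf.mul (continuousOn_id.rpow_const fun x hx => Or.inl (ne_of_gt hx))

lemma contP (α : ℝ) {f : ℝ → ℝ} (hf : ContinuousOn f (Set.Ioi 0)) (j : ℕ) :
    ContinuousOn (fun x : ℝ => (-(x ^ α)) ^ j * (f x * x ^ (α - 1))) (Set.Ioi 0) :=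
  (((continuousOn_id.rpow_const fun x hx => Or.inl (ne_of_gt hx)).neg).pow j).mul (contg α hf)

lemma uIcc_sub {s t : ℝ} (hs : 0 < s) (ht : 0 < t) : Set.uIcc s t ⊆ Set.Ioi 0 :=
  fun x hx => lt_of_lt_of_le (lt_min hs ht) hx.1

lemma intgP (α : ℝ) {s t : ℝ} {f : ℝ → ℝ} (hf : ContinuousOn f (Set.Ioi 0))
    (hs : 0 < s) (ht : 0 < t) (j : ℕ) :
    IntervalIntegrable (fun x : ℝ => (-(x ^ α)) ^ j * (f x * x ^ (α - 1))) volume s t :=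
  ((contP α hf j).mono (uIcc_sub hs ht)).intervalIntegrable

lemma hasDerivAt_auxI (α : ℝ) {s t : ℝ} {f : ℝ → ℝ} (hf : ContinuousOn f (Set.Ioi 0))
    (hs : 0 < s) (ht : 0 < t) (j : ℕ) :
    HasDerivAt (auxI α s f j) ((-(t ^ α)) ^ j * (f t * t ^ (α - 1))) t :=
  intervalIntegral.integral_hasDerivAt_right (intgP α hf hs ht j)
    ((contP α hf j).stronglyMeasurableAtFilter isOpen_Ioi t ht)
    ((contP α hf j).continuousAt (Ioi_mem_nhds ht))

lemma auxY_expand (L α : ℝ) {s : ℝ} {f : ℝ → ℝ} (hf : ContinuousOn f (Set.Ioi 0))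
    (hs : 0 < s) (m : ℕ) {t : ℝ} (ht : 0 < t) :
    auxY L α s f m t =
      ((m.factorial : ℝ))⁻¹ * L⁻¹ * (((L * α) ^ m)⁻¹) * auxS α s f m t := by
  have key : ∀ x : ℝ, ((t ^ α - x ^ α) / (L * α)) ^ m * f x * x ^ (α - 1)
      = ∑ i ∈ Finset.range (m + 1),
          (((L * α) ^ m)⁻¹ * ((m.choose i : ℝ) * t ^ (α * i))) *
            ((-(x ^ α)) ^ (m - i) * (f x * x ^ (α - 1))) := by
    intro x
    rw [div_pow, sub_eq_add_neg, add_pow, Finset.sum_div, Finset.sum_mul, Finset.sum_mul]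
    refine Finset.sum_congr rfl fun i _ => ?_
    rw [show t ^ (α * (i : ℕ)) = (t ^ α) ^ (i : ℕ) by
      rw [Real.rpow_mul ht.le, Real.rpow_natCast]]
    ring
  have h0 : Set.EqOn (fun x : ℝ => ((t ^ α - x ^ α) / (L * α)) ^ m * f x * x ^ (α - 1))
      (fun x : ℝ => ∑ i ∈ Finset.range (m + 1),
          (((L * α) ^ m)⁻¹ * ((m.choose i : ℝ) * t ^ (α * i))) *
            ((-(x ^ α)) ^ (m - i) * (f x * x ^ (α - 1)))) (Set.uIcc s t) := fun x _ => key x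
  have hint : ∫ x in s..t, ((t ^ α - x ^ α) / (L * α)) ^ m * f x * x ^ (α - 1)
      = ∑ i ∈ Finset.range (m + 1),
          (((L * α) ^ m)⁻¹ * ((m.choose i : ℝ) * t ^ (α * i))) * auxI α s f (m - i) t := by
    rw [intervalIntegral.integral_congr h0,
      intervalIntegral.integral_finset_sum
        (fun i _ => (intgP α hf hs ht (m - i)).const_mul _)]
    refine Finset.sum_congr rfl fun i _ => ?_
    rw [auxI, intervalIntegral.integral_const_mul]
  rw [auxY, hint, auxS, Finset.mul_sum, Finset.mul_sum, Finset.mul_sum]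
  refine Finset.sum_congr rfl fun i _ => ?_
  ring

lemma hasDerivAt_auxS (α : ℝ) {s : ℝ} {f : ℝ → ℝ} (hf : ContinuousOn f (Set.Ioi 0))
    (hs : 0 < s) (m : ℕ) {t : ℝ} (ht : 0 < t) :
    HasDerivAt (auxS α s f m)
      (∑ i ∈ Finset.range (m + 1),
        ((m.choose i : ℝ) * ((α * i) * t ^ (α * i - 1)) * auxI α s f (m - i) t +
          (m.choose i : ℝ) * t ^ (α * i) * ((-(t ^ α)) ^ (m - i) * (f t * t ^ (α - 1))))) t := by
  refine HasDerivAt.fun_sum fun i _ => ?_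
  have h1 : HasDerivAt (fun u : ℝ => u ^ (α * i)) ((α * i) * t ^ (α * i - 1)) t :=
    Real.hasDerivAt_rpow_const (Or.inl ht.ne')
  have h2 := hasDerivAt_auxI α hf hs ht (m - i)
  have h3 := (h1.const_mul ((m.choose i : ℝ))).fun_mul h2
  convert h3 using 1

lemma hasDerivAt_auxY_zero (L α : ℝ) {s : ℝ} {f : ℝ → ℝ} (hf : ContinuousOn f (Set.Ioi 0))
    (hs : 0 < s) {t : ℝ} (ht : 0 < t) :
    HasDerivAt (auxY L α s f 0) (L⁻¹ * (f t * t ^ (α - 1))) t := by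
  have heq : auxY L α s f 0 = fun u => L⁻¹ * ∫ x in s..u, f x * x ^ (α - 1) := by
    funext u
    simp [auxY, mul_assoc]
  rw [heq]
  have hg : HasDerivAt (fun u => ∫ x in s..u, f x * x ^ (α - 1)) (f t * t ^ (α - 1)) t :=
    intervalIntegral.integral_hasDerivAt_right
      (((contg α hf).mono (uIcc_sub hs ht)).intervalIntegrable)
      ((contg α hf).stronglyMeasurableAtFilter isOpen_Ioi t ht)
      ((contg α hf).continuousAt (Ioi_mem_nhds ht))
  exact hg.const_mul _

lemma hasDerivAt_auxY_succ (L α : ℝ) {s : ℝ} {f : ℝ → ℝ} (hL : 0 < L) (hα : 0 < α)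
    (hf : ContinuousOn f (Set.Ioi 0)) (hs : 0 < s) (m : ℕ) {t : ℝ} (ht : 0 < t) :
    HasDerivAt (auxY L α s f (m + 1)) (t ^ (α - 1) * L⁻¹ * auxY L α s f m t) t := by
  set K : ℝ := (((m + 1).factorial : ℝ))⁻¹ * L⁻¹ * (((L * α) ^ (m + 1))⁻¹) with hK
  have hS := hasDerivAt_auxS α hf hs (m + 1) ht
  have hKS := hS.const_mul K
  have hev : auxY L α s f (m + 1) =ᶠ[nhds t]
      fun u => K * auxS α s f (m + 1) u :=
    Filter.eventuallyEq_of_mem (Ioi_mem_nhds ht) (fun u hu => auxY_expand L α hf hs (m + 1) hu)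
  have h := hKS.congr_of_eventuallyEq hev
  -- now compute the derivative value
  have hBzero : ∑ i ∈ Finset.range (m + 1 + 1),
      (((m + 1).choose i : ℝ) * t ^ (α * i) * ((-(t ^ α)) ^ (m + 1 - i) * (f t * t ^ (α - 1))))
      = 0 := by
    have : ∑ i ∈ Finset.range (m + 1 + 1),
        (((m + 1).choose i : ℝ) * t ^ (α * i) * ((-(t ^ α)) ^ (m + 1 - i) * (f t * t ^ (α - 1))))
        = ((t ^ α + (-(t ^ α))) ^ (m + 1)) * (f t * t ^ (α - 1)) := by
      rw [add_pow, Finset.sum_mul]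
      refine Finset.sum_congr rfl fun i _ => ?_
      rw [show t ^ (α * (i : ℕ)) = (t ^ α) ^ (i : ℕ) by
        rw [Real.rpow_mul ht.le, Real.rpow_natCast]]
      ring
    rw [this, add_neg_cancel, zero_pow (Nat.succ_ne_zero m), zero_mul]
  have hA : ∑ i ∈ Finset.range (m + 1 + 1),
      (((m + 1).choose i : ℝ) * ((α * i) * t ^ (α * i - 1)) * auxI α s f (m + 1 - i) t)
      = (m + 1) * α * t ^ (α - 1) * auxS α s f m t := by
    rw [Finset.sum_range_succ']
    simp only [Nat.cast_zero, mul_zero, zero_mul, add_zero]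
    rw [auxS, Finset.mul_sum]
    refine Finset.sum_congr rfl fun i _ => ?_
    have hc : (((m + 1).choose (i + 1) : ℝ)) * ((i : ℝ) + 1) = ((m + 1) : ℝ) * (m.choose i : ℝ) := by
      exact_mod_cast (Nat.add_one_mul_choose_eq m i).symm
    have hsub : m + 1 - (i + 1) = m - i := by omega
    rw [hsub]
    push_cast
    rw [show α * ((i : ℝ) + 1) - 1 = (α - 1) + α * i by ring, Real.rpow_add ht]
    linear_combination α * t ^ (α - 1) * t ^ (α * (i : ℝ)) * auxI α s f (m - i) t * hc
  have hval : K * (∑ i ∈ Finset.range (m + 1 + 1),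
        (((m + 1).choose i : ℝ) * ((α * i) * t ^ (α * i - 1)) * auxI α s f (m + 1 - i) t +
          ((m + 1).choose i : ℝ) * t ^ (α * i) * ((-(t ^ α)) ^ (m + 1 - i) * (f t * t ^ (α - 1)))))
      = t ^ (α - 1) * L⁻¹ * auxY L α s f m t := by
    rw [Finset.sum_add_distrib, hBzero, add_zero, hA, auxY_expand L α hf hs m ht, hK]
    have hfac : (((m + 1).factorial : ℝ)) = ((m : ℝ) + 1) * (m.factorial : ℝ) := by
      push_cast [Nat.factorial_succ]; ring
    have hfm : (m.factorial : ℝ) ≠ 0 := Nat.cast_ne_zero.mpr m.factorial_ne_zero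
    have hLα : (L * α) ≠ 0 := mul_ne_zero hL.ne' hα.ne'
    rw [hfac, pow_succ]
    field_simp
  rw [← hval]
  exact h

theorem stmt1 (γ β ρ δ p q α : ℝ) (hγ : 0 < γ) (hβ : 0 < β) (hρ : 0 < ρ) (hδ : 0 < δ)
    (hp : 0 < p) (hq : 0 < q) (hα : 0 < α) (hα1 : α ≤ 1)
    (n : ℕ) (s : ℝ) (hs : 0 < s)
    (f : ℝ → ℝ) (hf : ContinuousOn f (Set.Ioi 0))
    (y : ℝ → ℝ)
    (hy : ∀ t : ℝ, y t = (1 / (Nat.factorial n : ℝ)) *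
      VInt γ β ρ δ p q α s t (fun τ => ((t ^ α - τ ^ α) / (vlam γ β ρ δ p q * α)) ^ n * f τ)) :
    alphaDiff γ β ρ δ p q α (n + 1) y ∧
    (∀ t > (0 : ℝ), (Dal γ β ρ δ p q α)^[n + 1] y t = f t) ∧
    (∀ j ≤ n, (Dal γ β ρ δ p q α)^[j] y s = 0) := by
  set L : ℝ := vlam γ β ρ δ p q with hLdef
  have hL : 0 < L := by
    rw [hLdef, vlam]
    have h1 : 0 < poch ρ q := div_pos (Real.Gamma_pos_of_pos (by linarith)) (Real.Gamma_pos_of_pos hρ)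
    have h2 : 0 < poch δ p := div_pos (Real.Gamma_pos_of_pos (by linarith)) (Real.Gamma_pos_of_pos hδ)
    exact div_pos (mul_pos (Real.Gamma_pos_of_pos hβ) h1)
      (mul_pos (Real.Gamma_pos_of_pos (by linarith)) h2)
  have hyY : y = auxY L α s f n := by
    funext t
    rw [hy t, VInt, auxY, one_div]
  -- key identity for iterates
  have key : ∀ j, j ≤ n → ∀ t ∈ Set.Ioi (0:ℝ),
      (Dal γ β ρ δ p q α)^[j] y t = auxY L α s f (n - j) t := by
    intro j
    induction j with
    | zero => intro _ t _; simpa using congrFun hyY t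
    | succ j ih =>
      intro hj t ht
      have hj' : j ≤ n := by omega
      rw [Function.iterate_succ_apply']
      have hev : (Dal γ β ρ δ p q α)^[j] y =ᶠ[nhds t] auxY L α s f (n - j) :=
        Filter.eventuallyEq_of_mem (Ioi_mem_nhds ht) (ih hj')
      have hnj : n - j = (n - (j + 1)) + 1 := by omega
      have hd := hasDerivAt_auxY_succ L α hL hα hf hs (n - (j + 1)) ht
      rw [← hnj] at hd
      have hderiv : deriv ((Dal γ β ρ δ p q α)^[j] y) t
          = t ^ (α - 1) * L⁻¹ * auxY L α s f (n - (j + 1)) t := by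
        rw [hev.deriv_eq, hd.deriv]
      show L * t ^ (1 - α) * deriv ((Dal γ β ρ δ p q α)^[j] y) t = _
      rw [hderiv]
      have ht1 : t ^ (1 - α) * t ^ (α - 1) = 1 := by
        rw [← Real.rpow_add ht]
        norm_num
      calc L * t ^ (1 - α) * (t ^ (α - 1) * L⁻¹ * auxY L α s f (n - (j + 1)) t)
          = (t ^ (1 - α) * t ^ (α - 1)) * (L * L⁻¹) * auxY L α s f (n - (j + 1)) t := by ring
        _ = auxY L α s f (n - (j + 1)) t := by
            rw [ht1, mul_inv_cancel₀ hL.ne']; ring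
  have ht1gen : ∀ t : ℝ, 0 < t → t ^ (1 - α) * t ^ (α - 1) = 1 := by
    intro t ht
    rw [← Real.rpow_add ht]; norm_num
  refine ⟨?_, ?_, ?_⟩
  · -- alphaDiff
    intro j hj t ht
    have hj' : j ≤ n := by omega
    have hdY : DifferentiableAt ℝ (auxY L α s f (n - j)) t := by
      rcases Nat.eq_zero_or_eq_succ_pred (n - j) with h | h
      · rw [h]; exact (hasDerivAt_auxY_zero L α hf hs ht).differentiableAt
      · rw [h]; exact (hasDerivAt_auxY_succ L α hL hα hf hs _ ht).differentiableAt
    exact (hdY.congr_of_eventuallyEq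
      (Filter.eventuallyEq_of_mem (Ioi_mem_nhds ht) (key j hj'))).differentiableWithinAt
  · -- final derivative
    intro t ht
    rw [Function.iterate_succ_apply']
    have hev : (Dal γ β ρ δ p q α)^[n] y =ᶠ[nhds t] auxY L α s f (n - n) :=
      Filter.eventuallyEq_of_mem (Ioi_mem_nhds ht) (key n le_rfl)
    have hd := hasDerivAt_auxY_zero L α hf hs ht
    have hderiv : deriv ((Dal γ β ρ δ p q α)^[n] y) t = L⁻¹ * (f t * t ^ (α - 1)) := by
      rw [hev.deriv_eq]
      rw [show n - n = 0 by omega]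
      exact hd.deriv
    show L * t ^ (1 - α) * deriv ((Dal γ β ρ δ p q α)^[n] y) t = f t
    rw [hderiv]
    calc L * t ^ (1 - α) * (L⁻¹ * (f t * t ^ (α - 1)))
        = (t ^ (1 - α) * t ^ (α - 1)) * (L * L⁻¹) * f t := by ring
      _ = f t := by rw [ht1gen t ht, mul_inv_cancel₀ hL.ne']; ring
  · -- vanishing at s
    intro j hj
    rw [key j hj s (Set.mem_Ioi.mpr hs)]
    simp [auxY]
end

section
/- (Truncated V-fractional variation of constants, general case.) Let n ≥ 1 be an integer, let r_1, …, r_n : (0,∞) → ℝ be continuous, and define the operator L by Ly = D_α^n y + ∑_{j=1}^n r_j · D_α^{n−j} y. Fix s > 0 and suppose yC : (0,∞) × (0,∞) → ℝ is such that for each fixed σ > 0 the function t ↦ yC(t,σ) is n times α-differentiable with L(yC(·,σ)) = 0 on (0,∞), D_α^j yC(σ,σ) = 0 for 0 ≤ j ≤ n−2 and D_α^{n−1} yC(σ,σ) = 1 (derivatives taken in the first variable), and suppose (t,σ) ↦ D_α^j yC(t,σ) is jointly continuous for every 0 ≤ j ≤ n. Then for every continuous f : (0,∞) → ℝ, the function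 y(t) = ∫_s^t yC(t,τ) f(τ) dωτ satisfies Ly(t) = f(t) for all t > 0 and D_α^j y(s) = 0 for every 0 ≤ j ≤ n−1. -/
open Real Set MeasureTheory Filter

lemma uIcc_subset_Ioi' {a b : ℝ} (ha : 0 < a) (hb : 0 < b) : Set.uIcc a b ⊆ Set.Ioi 0 :=
  fun x hx => lt_of_lt_of_le (lt_min ha hb) hx.1

lemma key_deriv (F dF : ℝ → ℝ → ℝ) (s t0 : ℝ) (hs : 0 < s) (ht0 : 0 < t0)
    (hF : ContinuousOn (fun P : ℝ × ℝ => F P.1 P.2) (Set.Ioi 0 ×ˢ Set.Ioi 0))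
    (hdF : ContinuousOn (fun P : ℝ × ℝ => dF P.1 P.2) (Set.Ioi 0 ×ˢ Set.Ioi 0))
    (hderiv : ∀ u ∈ Set.Ioi (0:ℝ), ∀ τ ∈ Set.Ioi (0:ℝ), HasDerivAt (fun v => F v τ) (dF u τ) u) :
    HasDerivAt (fun u => ∫ τ in s..u, F u τ) (F t0 t0 + ∫ τ in s..t0, dF t0 τ) t0 := by
  have hopen : IsOpen (Set.Ioi (0:ℝ) ×ˢ Set.Ioi (0:ℝ)) := isOpen_Ioi.prod isOpen_Ioi
  have hFslice : ∀ u : ℝ, 0 < u → ContinuousOn (fun τ => F u τ) (Set.Ioi 0) := by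
    intro u hu
    exact hF.comp (Continuous.continuousOn (Continuous.prodMk_right u))
      (fun τ hτ => Set.mem_prod.2 ⟨hu, hτ⟩)
  have hdFslice : ∀ u : ℝ, 0 < u → ContinuousOn (fun τ => dF u τ) (Set.Ioi 0) := by
    intro u hu
    exact hdF.comp (Continuous.continuousOn (Continuous.prodMk_right u))
      (fun τ hτ => Set.mem_prod.2 ⟨hu, hτ⟩)
  have hFint : ∀ u : ℝ, 0 < u → ∀ a b : ℝ, 0 < a → 0 < b →
      IntervalIntegrable (fun τ => F u τ) volume a b := by
    intro u hu a b ha hb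
    exact ((hFslice u hu).mono (uIcc_subset_Ioi' ha hb)).intervalIntegrable
  have hI : Set.uIoc s t0 ⊆ Set.Ioi 0 := (Set.uIoc_subset_uIcc).trans (uIcc_subset_Ioi' hs ht0)
  have hball : Metric.ball t0 (t0/2) ⊆ Set.Ioi 0 := by
    intro x hx
    have := abs_lt.1 (mem_ball_iff_norm.1 hx)
    simp only [Set.mem_Ioi]; linarith [this.1]
  obtain ⟨M, hM⟩ : ∃ M, ∀ P ∈ (Set.Icc (t0/2) (t0 + t0/2) ×ˢ Set.uIcc s t0), ‖dF P.1 P.2‖ ≤ M := by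
    apply IsCompact.exists_bound_of_continuousOn (isCompact_Icc.prod isCompact_uIcc)
    exact hdF.mono (fun P hP => ⟨lt_of_lt_of_le (by linarith) hP.1.1,
      uIcc_subset_Ioi' hs ht0 hP.2⟩)
  have G1 : HasDerivAt (fun u => ∫ τ in s..t0, F u τ) (∫ τ in s..t0, dF t0 τ) t0 := by
    refine (intervalIntegral.hasDerivAt_integral_of_dominated_loc_of_deriv_le
      (F := F) (F' := dF) (bound := fun _ => M) (Metric.ball_mem_nhds t0 (half_pos ht0)) ?_ ?_ ?_ ?_ ?_ ?_).2
    · filter_upwards [Ioi_mem_nhds ht0] with x hx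
      exact ((hFslice x hx).mono hI).aestronglyMeasurable measurableSet_uIoc
    · exact hFint t0 ht0 s t0 hs ht0
    · exact ((hdFslice t0 ht0).mono hI).aestronglyMeasurable measurableSet_uIoc
    · refine Filter.Eventually.of_forall (fun τ hτ x hx => ?_)
      refine hM (x, τ) ⟨?_, Set.uIoc_subset_uIcc hτ⟩
      have := abs_lt.1 (mem_ball_iff_norm.1 hx)
      exact ⟨by linarith [this.1], by linarith [this.2]⟩
    · exact intervalIntegrable_const
    · refine Filter.Eventually.of_forall (fun τ hτ x hx => ?_)
      exact hderiv x (hball hx) τ (hI hτ)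
  have G2 : HasDerivAt (fun u => ∫ τ in t0..u, F u τ) (F t0 t0) t0 := by
    rw [hasDerivAt_iff_isLittleO]
    rw [Asymptotics.isLittleO_iff]
    intro c hc
    have hcont : ContinuousAt (fun P : ℝ × ℝ => F P.1 P.2) (t0, t0) :=
      hF.continuousAt (hopen.mem_nhds ⟨ht0, ht0⟩)
    obtain ⟨δ, hδpos, hδ⟩ := Metric.continuousAt_iff.1 hcont c hc
    filter_upwards [Metric.ball_mem_nhds t0 (lt_min hδpos ht0)] with u hu
    have hud : |u - t0| < min δ t0 := by
      simpa [Real.dist_eq] using mem_ball_iff_norm.1 hu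
    have hu0 : 0 < u := by
      have := abs_lt.1 hud
      have h2 := min_le_right δ t0
      linarith [this.1]
    have hconst : (u - t0) • F t0 t0 = ∫ τ in t0..u, F t0 t0 := by
      rw [intervalIntegral.integral_const]
    have hint1 : IntervalIntegrable (fun τ => F u τ) volume t0 u := hFint u hu0 t0 u ht0 hu0
    have hsub : (∫ τ in t0..u, F u τ) - ∫ τ in t0..u, F t0 t0
        = ∫ τ in t0..u, (F u τ - F t0 t0) :=
      (intervalIntegral.integral_sub hint1 intervalIntegrable_const).symm
    have key : ‖∫ τ in t0..u, (F u τ - F t0 t0)‖ ≤ c * |u - t0| := by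
      apply intervalIntegral.norm_integral_le_of_norm_le_const
      intro x hx
      have hxd : |x - t0| ≤ |u - t0| := by
        rcases Set.mem_uIoc.1 hx with ⟨h1, h2⟩ | ⟨h1, h2⟩
        · rw [abs_of_pos (by linarith : (0:ℝ) < x - t0)]
          calc x - t0 ≤ u - t0 := by linarith
            _ ≤ |u - t0| := le_abs_self _
        · rw [abs_sub_comm, abs_of_nonneg (by linarith : (0:ℝ) ≤ t0 - x)]
          calc t0 - x ≤ t0 - u := by linarith
            _ ≤ |u - t0| := by rw [abs_sub_comm]; exact le_abs_self _
      have hd : dist (u, x) (t0, t0) < δ := by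
        rw [Prod.dist_eq]
        apply max_lt <;> rw [Real.dist_eq]
        · exact lt_of_lt_of_le hud (min_le_left _ _)
        · exact lt_of_le_of_lt hxd (lt_of_lt_of_le hud (min_le_left _ _))
      have := hδ hd
      rw [Real.dist_eq] at this
      exact le_of_lt this
    calc ‖(∫ τ in t0..u, F u τ) - (∫ τ in t0..t0, F t0 τ) - (u - t0) • F t0 t0‖
        = ‖∫ τ in t0..u, (F u τ - F t0 t0)‖ := by
          rw [intervalIntegral.integral_same, hconst, sub_zero, hsub]
      _ ≤ c * |u - t0| := key
      _ = c * ‖u - t0‖ := by rw [Real.norm_eq_abs]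
  have heq : (fun u => (∫ τ in s..t0, F u τ) + ∫ τ in t0..u, F u τ)
      =ᶠ[nhds t0] (fun u => ∫ τ in s..u, F u τ) := by
    filter_upwards [Ioi_mem_nhds ht0] with u hu
    exact intervalIntegral.integral_add_adjacent_intervals
      (hFint u hu s t0 hs ht0) (hFint u hu t0 u ht0 hu)
  have := (G1.add G2).congr_of_eventuallyEq heq.symm
  rw [add_comm] at this
  exact this

/-- auxiliary integrand -/
noncomputable def Fj (γ β ρ δ p q α : ℝ) (yC : ℝ → ℝ → ℝ) (f : ℝ → ℝ) (j : ℕ) (t τ : ℝ) : ℝ :=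
  (Dal γ β ρ δ p q α)^[j] (fun u => yC u τ) t * (f τ * τ ^ (α - 1))

/-- auxiliary derivative integrand -/
noncomputable def dFj (γ β ρ δ p q α : ℝ) (yC : ℝ → ℝ → ℝ) (f : ℝ → ℝ) (j : ℕ) (u τ : ℝ) : ℝ :=
  (vlam γ β ρ δ p q * u ^ (1 - α))⁻¹ * Fj γ β ρ δ p q α yC f (j+1) u τ

set_option maxHeartbeats 2000000 in
theorem stmt2 (γ β ρ δ p q α : ℝ) (hγ : 0 < γ) (hβ : 0 < β) (hρ : 0 < ρ) (hδ : 0 < δ)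
    (hp : 0 < p) (hq : 0 < q) (hα : 0 < α) (hα1 : α ≤ 1)
    (n : ℕ) (hn : 1 ≤ n)
    (r : ℕ → ℝ → ℝ) (hr : ∀ j, 1 ≤ j → j ≤ n → ContinuousOn (r j) (Set.Ioi 0))
    (L : (ℝ → ℝ) → ℝ → ℝ)
    (hL : ∀ g : ℝ → ℝ, ∀ t : ℝ,
      L g t = (Dal γ β ρ δ p q α)^[n] g t + ∑ j ∈ Finset.Icc 1 n, r j t * (Dal γ β ρ δ p q α)^[n - j] g t)
    (s : ℝ) (hs : 0 < s)
    (yC : ℝ → ℝ → ℝ)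
    (hyCdiff : ∀ σ > (0 : ℝ), alphaDiff γ β ρ δ p q α n (fun t => yC t σ))
    (hyCL : ∀ σ > (0 : ℝ), ∀ t > (0 : ℝ), L (fun t => yC t σ) t = 0)
    (hyC0 : ∀ σ > (0 : ℝ), ∀ j : ℕ, j + 2 ≤ n → (Dal γ β ρ δ p q α)^[j] (fun t => yC t σ) σ = 0)
    (hyC1 : ∀ σ > (0 : ℝ), (Dal γ β ρ δ p q α)^[n - 1] (fun t => yC t σ) σ = 1)
    (hyCc : ∀ j ≤ n, ContinuousOn
      (fun P : ℝ × ℝ => (Dal γ β ρ δ p q α)^[j] (fun t => yC t P.2) P.1) (Set.Ioi 0 ×ˢ Set.Ioi 0))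
    (f : ℝ → ℝ) (hf : ContinuousOn f (Set.Ioi 0))
    (y : ℝ → ℝ)
    (hy : ∀ t : ℝ, y t = VInt γ β ρ δ p q α s t (fun τ => yC t τ * f τ)) :
    (∀ t > (0 : ℝ), L y t = f t) ∧
    (∀ j < n, (Dal γ β ρ δ p q α)^[j] y s = 0) := by
  have hpoch : ∀ x z : ℝ, 0 < x → 0 < z → 0 < poch x z := by
    intro x z hx hz
    unfold poch
    exact div_pos (Real.Gamma_pos_of_pos (by linarith)) (Real.Gamma_pos_of_pos hx)
  have hlam : 0 < vlam γ β ρ δ p q := by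
    unfold vlam
    exact div_pos (mul_pos (Real.Gamma_pos_of_pos hβ) (hpoch ρ q hρ hq))
      (mul_pos (Real.Gamma_pos_of_pos (by linarith)) (hpoch δ p hδ hp))
  have hlamne : vlam γ β ρ δ p q ≠ 0 := ne_of_gt hlam
  -- joint continuity of Fj
  have hrpowc : ContinuousOn (fun x : ℝ => x ^ (α - 1)) (Set.Ioi 0) := fun x hx =>
    (Real.continuousAt_rpow_const x (α - 1) (Or.inl (ne_of_gt hx))).continuousWithinAt
  have hFc : ∀ j ≤ n, ContinuousOn
      (fun P : ℝ × ℝ => Fj γ β ρ δ p q α yC f j P.1 P.2) (Set.Ioi 0 ×ˢ Set.Ioi 0) := by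
    intro j hj
    have h1 : ContinuousOn (fun P : ℝ × ℝ => f P.2) (Set.Ioi (0:ℝ) ×ˢ Set.Ioi 0) :=
      hf.comp continuous_snd.continuousOn (fun P hP => hP.2)
    have h2 : ContinuousOn (fun P : ℝ × ℝ => P.2 ^ (α - 1)) (Set.Ioi (0:ℝ) ×ˢ Set.Ioi 0) :=
      hrpowc.comp continuous_snd.continuousOn (fun P hP => hP.2)
    exact (hyCc j hj).mul (h1.mul h2)
  have hdFc : ∀ j < n, ContinuousOn
      (fun P : ℝ × ℝ => dFj γ β ρ δ p q α yC f j P.1 P.2) (Set.Ioi 0 ×ˢ Set.Ioi 0) := by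
    intro j hj
    have h1 : ContinuousOn (fun P : ℝ × ℝ => (vlam γ β ρ δ p q * P.1 ^ (1 - α))⁻¹)
        (Set.Ioi (0:ℝ) ×ˢ Set.Ioi 0) := by
      intro P hP
      refine ContinuousAt.continuousWithinAt ?_
      have hx : ContinuousAt (fun P : ℝ × ℝ => P.1 ^ (1 - α)) P :=
        (Real.continuousAt_rpow_const P.1 (1 - α) (Or.inl (ne_of_gt hP.1))).comp
          continuous_fst.continuousAt
      exact (continuousAt_const.mul hx).inv₀
        (ne_of_gt (mul_pos hlam (Real.rpow_pos_of_pos hP.1 _)))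
    exact h1.mul (hFc (j+1) hj)
  -- slice integrability
  have hInt : ∀ j ≤ n, ∀ t : ℝ, 0 < t →
      IntervalIntegrable (fun τ => Fj γ β ρ δ p q α yC f j t τ) volume s t := by
    intro j hj t ht
    have : ContinuousOn (fun τ => Fj γ β ρ δ p q α yC f j t τ) (Set.Ioi 0) :=
      (hFc j hj).comp (Continuous.continuousOn (Continuous.prodMk_right t))
        (fun τ hτ => Set.mem_prod.2 ⟨ht, hτ⟩)
    exact (this.mono (uIcc_subset_Ioi' hs ht)).intervalIntegrable
  -- pointwise derivative in first variable
  have hD1 : ∀ j < n, ∀ τ : ℝ, 0 < τ → ∀ u : ℝ, 0 < u →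
      HasDerivAt (fun v => Fj γ β ρ δ p q α yC f j v τ) (dFj γ β ρ δ p q α yC f j u τ) u := by
    intro j hj τ hτ u hu
    have hdiff : DifferentiableAt ℝ ((Dal γ β ρ δ p q α)^[j] (fun w => yC w τ)) u :=
      ((hyCdiff τ hτ j hj) u hu).differentiableAt (isOpen_Ioi.mem_nhds hu)
    have hne : vlam γ β ρ δ p q * u ^ (1 - α) ≠ 0 :=
      ne_of_gt (mul_pos hlam (Real.rpow_pos_of_pos hu _))
    have h2 : (Dal γ β ρ δ p q α)^[j+1] (fun w => yC w τ) u
        = vlam γ β ρ δ p q * u ^ (1 - α) * deriv ((Dal γ β ρ δ p q α)^[j] (fun w => yC w τ)) u := by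
      rw [Function.iterate_succ_apply']; rfl
    have hval : deriv ((Dal γ β ρ δ p q α)^[j] (fun w => yC w τ)) u
        = (vlam γ β ρ δ p q * u ^ (1 - α))⁻¹ * (Dal γ β ρ δ p q α)^[j+1] (fun w => yC w τ) u := by
      rw [h2]; field_simp
    have := (hval ▸ hdiff.hasDerivAt).mul_const (f τ * τ ^ (α - 1))
    simpa [Fj, dFj, mul_assoc] using this
  -- the induction step
  have step : ∀ j < n, (∀ t : ℝ, 0 < t → (Dal γ β ρ δ p q α)^[j] y t
        = (vlam γ β ρ δ p q)⁻¹ * ∫ τ in s..t, Fj γ β ρ δ p q α yC f j t τ) →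
      ∀ t : ℝ, 0 < t → (Dal γ β ρ δ p q α)^[j+1] y t
        = t ^ (1 - α) * Fj γ β ρ δ p q α yC f j t t
          + (vlam γ β ρ δ p q)⁻¹ * ∫ τ in s..t, Fj γ β ρ δ p q α yC f (j+1) t τ := by
    intro j hj hIH t ht
    have hev : (Dal γ β ρ δ p q α)^[j] y =ᶠ[nhds t]
        (fun u => (vlam γ β ρ δ p q)⁻¹ * ∫ τ in s..u, Fj γ β ρ δ p q α yC f j u τ) := by
      filter_upwards [Ioi_mem_nhds ht] with u hu
      exact hIH u hu
    have hkey := key_deriv (Fj γ β ρ δ p q α yC f j) (dFj γ β ρ δ p q α yC f j) s t hs ht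
      (hFc j hj.le) (hdFc j hj) (fun u hu τ hτ => hD1 j hj τ hτ u hu)
    have hfull := hkey.const_mul (vlam γ β ρ δ p q)⁻¹
    have hdeq : deriv ((Dal γ β ρ δ p q α)^[j] y) t
        = (vlam γ β ρ δ p q)⁻¹ * (Fj γ β ρ δ p q α yC f j t t
            + ∫ τ in s..t, dFj γ β ρ δ p q α yC f j t τ) := by
      rw [hev.deriv_eq]
      exact hfull.deriv
    rw [Function.iterate_succ_apply']
    show vlam γ β ρ δ p q * t ^ (1 - α) * deriv ((Dal γ β ρ δ p q α)^[j] y) t = _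
    rw [hdeq]
    have hIeq : (∫ τ in s..t, dFj γ β ρ δ p q α yC f j t τ)
        = (vlam γ β ρ δ p q * t ^ (1 - α))⁻¹ * ∫ τ in s..t, Fj γ β ρ δ p q α yC f (j+1) t τ := by
      simp only [dFj]
      exact intervalIntegral.integral_const_mul _ _
    rw [hIeq]
    have htne : t ^ (1 - α) ≠ 0 := ne_of_gt (Real.rpow_pos_of_pos ht _)
    field_simp
  -- the main formula
  have main : ∀ j, j ≤ n - 1 → ∀ t : ℝ, 0 < t → (Dal γ β ρ δ p q α)^[j] y t
      = (vlam γ β ρ δ p q)⁻¹ * ∫ τ in s..t, Fj γ β ρ δ p q α yC f j t τ := by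
    intro j
    induction j with
    | zero =>
      intro _ t ht
      simp only [Function.iterate_zero, id_eq]
      rw [hy t]
      simp only [VInt]
      congr 1
      apply intervalIntegral.integral_congr
      intro x _
      simp only [Fj, Function.iterate_zero, id_eq]
      ring
    | succ j ih =>
      intro hj1 t ht
      have hjn : j < n := by omega
      have := step j hjn (ih (by omega)) t ht
      rw [this]
      simp only [Fj]
      rw [hyC0 t ht j (by omega)]
      ring
  -- the n-th derivative
  have hfin : ∀ t : ℝ, 0 < t → (Dal γ β ρ δ p q α)^[n] y t
      = f t + (vlam γ β ρ δ p q)⁻¹ * ∫ τ in s..t, Fj γ β ρ δ p q α yC f n t τ := by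
    intro t ht
    have h1 := step (n-1) (by omega) (main (n-1) le_rfl) t ht
    have e : n - 1 + 1 = n := by omega
    rw [e] at h1
    rw [h1]
    simp only [Fj]
    rw [hyC1 t ht, one_mul]
    congr 1
    rw [mul_comm (f t) (t ^ (α - 1)), ← mul_assoc, ← Real.rpow_add ht]
    norm_num
  constructor
  · intro t ht
    rw [hL y t, hfin t ht]
    have hsum : ∀ j ∈ Finset.Icc 1 n, r j t * (Dal γ β ρ δ p q α)^[n - j] y t
        = (vlam γ β ρ δ p q)⁻¹ * ∫ τ in s..t, r j t * Fj γ β ρ δ p q α yC f (n - j) t τ := by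
      intro j hjm
      obtain ⟨hj1, hjn⟩ := Finset.mem_Icc.1 hjm
      rw [main (n - j) (by omega) t ht, intervalIntegral.integral_const_mul]
      ring
    rw [Finset.sum_congr rfl hsum, ← Finset.mul_sum]
    have hsplit : (∑ j ∈ Finset.Icc 1 n, ∫ τ in s..t, r j t * Fj γ β ρ δ p q α yC f (n - j) t τ)
        = ∫ τ in s..t, ∑ j ∈ Finset.Icc 1 n, r j t * Fj γ β ρ δ p q α yC f (n - j) t τ := by
      rw [intervalIntegral.integral_finset_sum]
      intro j hjm
      exact (hInt (n - j) (by omega) t ht).const_mul (r j t)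
    rw [hsplit]
    have hintsum : IntervalIntegrable
        (fun τ => ∑ j ∈ Finset.Icc 1 n, r j t * Fj γ β ρ δ p q α yC f (n - j) t τ) volume s t := by
      have h1 : IntervalIntegrable
          (∑ j ∈ Finset.Icc 1 n, fun τ => r j t * Fj γ β ρ δ p q α yC f (n - j) t τ)
          volume s t :=
        IntervalIntegrable.sum _ (fun j hjm => (hInt (n - j) (by omega) t ht).const_mul (r j t))
      have h2 : (∑ j ∈ Finset.Icc 1 n, fun τ => r j t * Fj γ β ρ δ p q α yC f (n - j) t τ)
          = fun τ => ∑ j ∈ Finset.Icc 1 n, r j t * Fj γ β ρ δ p q α yC f (n - j) t τ := by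
        funext τ
        rw [Finset.sum_apply]
      rw [h2] at h1
      exact h1
    have hzz : (∫ τ in s..t, Fj γ β ρ δ p q α yC f n t τ)
        + (∫ τ in s..t, ∑ j ∈ Finset.Icc 1 n, r j t * Fj γ β ρ δ p q α yC f (n - j) t τ) = 0 := by
      rw [← intervalIntegral.integral_add (hInt n le_rfl t ht) hintsum]
      have heq0 : Set.EqOn
          (fun τ => Fj γ β ρ δ p q α yC f n t τ
            + ∑ j ∈ Finset.Icc 1 n, r j t * Fj γ β ρ δ p q α yC f (n - j) t τ)
          (fun _ => (0:ℝ)) (Set.uIcc s t) := by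
        intro τ hτ
        have hτ0 : 0 < τ := uIcc_subset_Ioi' hs ht hτ
        have hLyC := hyCL τ hτ0 t ht
        rw [hL] at hLyC
        simp only [Fj]
        have hre : ∀ j ∈ Finset.Icc 1 n,
            r j t * ((Dal γ β ρ δ p q α)^[n - j] (fun u => yC u τ) t * (f τ * τ ^ (α - 1)))
            = (r j t * (Dal γ β ρ δ p q α)^[n - j] (fun u => yC u τ) t) * (f τ * τ ^ (α - 1)) :=
          fun j _ => by ring
        rw [Finset.sum_congr rfl hre, ← Finset.sum_mul, ← add_mul, hLyC, zero_mul]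
      rw [intervalIntegral.integral_congr heq0]
      simp
    rw [add_assoc, ← mul_add, hzz, mul_zero, add_zero]
  · intro j hj
    rw [main j (by omega) s hs, intervalIntegral.integral_same, mul_zero]
end

section
/- (Truncated V-fractional Taylor's formula.) Let n ≥ 0 be an integer and let f : (0,∞) → ℝ be (n+1) times α-differentiable with D_α^{n+1} f continuous on (0,∞). Then for all s, t > 0, f(t) = ∑_{k=0}^n (1/k!)·((t^α − s^α)/(λα))^k · D_α^k f(s) + (1/n!) ∫_s^t ((t^α − τ^α)/(λα))^n · D_α^{n+1} f(τ) dωτ. -/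
open Real Set MeasureTheory Filter

lemma poch_pos' {x y : ℝ} (hx : 0 < x) (hy : 0 < y) : 0 < poch x y :=
  div_pos (Real.Gamma_pos_of_pos (by linarith)) (Real.Gamma_pos_of_pos hx)

lemma vlam_pos' {γ β ρ δ p q : ℝ} (hγ : 0 < γ) (hβ : 0 < β) (hρ : 0 < ρ) (hδ : 0 < δ)
    (hp : 0 < p) (hq : 0 < q) : 0 < vlam γ β ρ δ p q :=
  div_pos (mul_pos (Real.Gamma_pos_of_pos hβ) (poch_pos' hρ hq))
    (mul_pos (Real.Gamma_pos_of_pos (by linarith)) (poch_pos' hδ hp))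

/-- Telescoping identity for the Taylor-sum derivative. -/
lemma tele_sum (C w : ℝ) (G : ℕ → ℝ) : ∀ m : ℕ,
    (∑ k ∈ Finset.range (m + 1), (1 / (Nat.factorial k : ℝ)) *
        ((↑k * C ^ (k - 1) * (-w)) * G k + C ^ k * (G (k + 1) * w)))
      = (1 / (Nat.factorial m : ℝ)) * (C ^ m * (G (m + 1) * w)) := by
  intro m
  induction m with
  | zero => simp
  | succ m ih =>
    rw [Finset.sum_range_succ, ih]
    have hfac : (Nat.factorial (m + 1) : ℝ) = (m + 1) * Nat.factorial m := by
      push_cast [Nat.factorial_succ]; ring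
    have hfne : (Nat.factorial m : ℝ) ≠ 0 := Nat.cast_ne_zero.mpr (Nat.factorial_ne_zero m)
    have hfne' : (Nat.factorial (m + 1) : ℝ) ≠ 0 := Nat.cast_ne_zero.mpr (Nat.factorial_ne_zero _)
    have hk1 : (m + 1 : ℕ) - 1 = m := rfl
    rw [hk1]
    rw [hfac]
    field_simp
    push_cast
    ring

theorem stmt3 (γ β ρ δ p q α : ℝ) (hγ : 0 < γ) (hβ : 0 < β) (hρ : 0 < ρ) (hδ : 0 < δ)
    (hp : 0 < p) (hq : 0 < q) (hα : 0 < α) (hα1 : α ≤ 1)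
    (n : ℕ) (f : ℝ → ℝ)
    (hdiff : alphaDiff γ β ρ δ p q α (n + 1) f)
    (hcont : ContinuousOn ((Dal γ β ρ δ p q α)^[n + 1] f) (Set.Ioi 0)) :
    ∀ s > (0 : ℝ), ∀ t > (0 : ℝ),
      f t = (∑ k ∈ Finset.range (n + 1),
          (1 / (Nat.factorial k : ℝ)) * ((t ^ α - s ^ α) / (vlam γ β ρ δ p q * α)) ^ k *
            (Dal γ β ρ δ p q α)^[k] f s) +
        (1 / (Nat.factorial n : ℝ)) * VInt γ β ρ δ p q α s t
          (fun τ => ((t ^ α - τ ^ α) / (vlam γ β ρ δ p q * α)) ^ n * (Dal γ β ρ δ p q α)^[n + 1] f τ) := by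
  intro s hs t ht
  set L := vlam γ β ρ δ p q with hLdef
  have hL : 0 < L := vlam_pos' hγ hβ hρ hδ hp hq
  have hLne : L ≠ 0 := ne_of_gt hL
  have hαne : α ≠ 0 := ne_of_gt hα
  set D := Dal γ β ρ δ p q α with hDdef
  have hgsucc : ∀ (k : ℕ) (τ : ℝ), D^[k + 1] f τ = L * τ ^ (1 - α) * deriv (D^[k] f) τ := by
    intro k τ
    rw [Function.iterate_succ_apply']
    rfl
  set c : ℝ → ℝ := fun τ => (t ^ α - τ ^ α) / (L * α) with hcdef
  -- derivative of c
  have hc : ∀ τ ∈ Ioi (0 : ℝ), HasDerivAt c (-(τ ^ (α - 1) / L)) τ := by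
    intro τ hτ
    have h1 : HasDerivAt (fun x : ℝ => x ^ α) (α * τ ^ (α - 1)) τ :=
      Real.hasDerivAt_rpow_const (Or.inl (ne_of_gt hτ))
    have h2 := ((hasDerivAt_const τ (t ^ α)).sub h1).div_const (L * α)
    refine h2.congr_deriv ?_
    rw [zero_sub, neg_div, mul_comm L α, mul_div_mul_left _ _ hαne]
  -- derivative of the iterated derivatives
  have hgd : ∀ k, k ≤ n → ∀ τ ∈ Ioi (0 : ℝ),
      HasDerivAt (D^[k] f) (D^[k + 1] f τ * (τ ^ (α - 1) / L)) τ := by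
    intro k hk τ hτ
    have hdk : DifferentiableAt ℝ (D^[k] f) τ :=
      (hdiff k (Nat.lt_succ_of_le hk) τ hτ).differentiableAt (isOpen_Ioi.mem_nhds hτ)
    have heq : D^[k + 1] f τ * (τ ^ (α - 1) / L) = deriv (D^[k] f) τ := by
      rw [hgsucc]
      have hpow : τ ^ (1 - α) * τ ^ (α - 1) = 1 := by
        rw [← Real.rpow_add hτ]
        norm_num
      calc L * τ ^ (1 - α) * deriv (D^[k] f) τ * (τ ^ (α - 1) / L)
          = (τ ^ (1 - α) * τ ^ (α - 1)) * deriv (D^[k] f) τ * (L / L) := by ring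
        _ = deriv (D^[k] f) τ := by rw [hpow, div_self hLne]; ring
    exact heq ▸ hdk.hasDerivAt
  set F : ℝ → ℝ := fun τ => ∑ k ∈ Finset.range (n + 1),
    (1 / (Nat.factorial k : ℝ)) * (c τ ^ k * D^[k] f τ) with hFdef
  set u : ℝ → ℝ := fun τ =>
    (1 / (Nat.factorial n : ℝ)) * (c τ ^ n * (D^[n + 1] f τ * (τ ^ (α - 1) / L))) with hudef
  have hF : ∀ τ ∈ Ioi (0 : ℝ), HasDerivAt F (u τ) τ := by
    intro τ hτ
    have hterm : ∀ k ∈ Finset.range (n + 1),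
        HasDerivAt (fun x => (1 / (Nat.factorial k : ℝ)) * (c x ^ k * D^[k] f x))
          ((1 / (Nat.factorial k : ℝ)) *
            ((↑k * c τ ^ (k - 1) * (-(τ ^ (α - 1) / L))) * D^[k] f τ +
              c τ ^ k * (D^[k + 1] f τ * (τ ^ (α - 1) / L)))) τ := by
      intro k hk
      exact (((hc τ hτ).pow k).mul
        (hgd k (Nat.lt_succ_iff.mp (Finset.mem_range.mp hk)) τ hτ)).const_mul _
    have hsum := HasDerivAt.fun_sum hterm
    rw [tele_sum (c τ) (τ ^ (α - 1) / L) (fun k => D^[k] f τ) n] at hsum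
    exact hsum
  have hsub : uIcc s t ⊆ Ioi (0 : ℝ) := fun x hx =>
    lt_of_lt_of_le (lt_min hs ht) hx.1
  -- continuity of u on the interval, hence interval integrability
  have hcontu : ContinuousOn u (uIcc s t) := by
    have h1 : ContinuousOn (fun τ : ℝ => τ ^ α) (uIcc s t) := fun x hx =>
      (Real.continuousAt_rpow_const x α (Or.inl (ne_of_gt (hsub hx)))).continuousWithinAt
    have h2 : ContinuousOn (fun τ : ℝ => τ ^ (α - 1)) (uIcc s t) := fun x hx =>
      (Real.continuousAt_rpow_const x (α - 1) (Or.inl (ne_of_gt (hsub hx)))).continuousWithinAt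
    have h3 : ContinuousOn (D^[n + 1] f) (uIcc s t) := hcont.mono hsub
    have hcc : ContinuousOn c (uIcc s t) := (continuousOn_const.sub h1).div_const _
    exact continuousOn_const.mul ((hcc.pow n).mul (h3.mul (h2.div_const _)))
  have hint : IntervalIntegrable u volume s t := hcontu.intervalIntegrable
  have hFTC : (∫ x in s..t, u x) = F t - F s :=
    intervalIntegral.integral_eq_sub_of_hasDerivAt (fun x hx => hF x (hsub hx)) hint
  have hct : c t = 0 := by simp [hcdef]
  have hFt : F t = f t := by
    show (∑ k ∈ Finset.range (n + 1),
      (1 / (Nat.factorial k : ℝ)) * (c t ^ k * D^[k] f t)) = f t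
    rw [Finset.sum_eq_single 0]
    · simp
    · intro k hk hk0
      rw [hct, zero_pow hk0]
      ring
    · intro h
      exact absurd (Finset.mem_range.mpr (Nat.succ_pos n)) h
  have hVI : (1 / (Nat.factorial n : ℝ)) * VInt γ β ρ δ p q α s t
      (fun τ => ((t ^ α - τ ^ α) / (L * α)) ^ n * D^[n + 1] f τ) = ∫ x in s..t, u x := by
    rw [VInt, ← mul_assoc, ← intervalIntegral.integral_const_mul]
    apply intervalIntegral.integral_congr
    intro x _
    simp only [hudef, hcdef]
    ring
  have hFs : (∑ k ∈ Finset.range (n + 1),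
      (1 / (Nat.factorial k : ℝ)) * ((t ^ α - s ^ α) / (L * α)) ^ k * D^[k] f s) = F s := by
    show _ = ∑ k ∈ Finset.range (n + 1),
      (1 / (Nat.factorial k : ℝ)) * (c s ^ k * D^[k] f s)
    refine Finset.sum_congr rfl fun k _ => ?_
    simp only [hcdef]
    ring
  rw [hFs, hVI, hFTC, hFt]
  ring
end

section
/- Let 0 < a ≤ b, let n ≥ −1 be an integer, and let f : (0,∞) → ℝ be (n+1) times α-differentiable with D_α^{n+1} f continuous on (0,∞). Then ∫_a^b (D_α^{n+1} f(s)/(n+1)!)·((a^α − s^α)/(λα))^{n+1} dωs = ∫_a^b R_{n,f}(b,s) dωs. -/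
open Real Set MeasureTheory Filter

lemma key_taylor (L al a b : ℝ) (hL : 0 < L) (hal : 0 < al) (ha : 0 < a) (hab : a ≤ b)
    (M : ℕ) (F : ℕ → ℝ → ℝ)
    (hder : ∀ k, k < M → ∀ s ∈ Set.Icc a b, HasDerivAt (F k) (F (k+1) s * s ^ (al-1) / L) s)
    (hc : ∀ k, k ≤ M → ContinuousOn (F k) (Set.Icc a b)) :
    (∫ s in a..b, (F M s / (Nat.factorial M : ℝ)) * ((a ^ al - s ^ al)/(L*al)) ^ M * s ^ (al-1)) =
    ∫ s in a..b, (F 0 s - ∑ k ∈ Finset.range M, (F k b / (Nat.factorial k : ℝ)) *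
      ((s ^ al - b ^ al)/(L*al)) ^ k) * s ^ (al-1) := by
  have huIcc : Set.uIcc a b = Set.Icc a b := Set.uIcc_of_le hab
  have hLne : L ≠ 0 := hL.ne'
  have halne : al ≠ 0 := hal.ne'
  -- basic continuity facts
  have hrpow : ∀ c : ℝ, ContinuousOn (fun s : ℝ => s ^ c) (Set.Icc a b) := by
    intro c s hs
    exact (Real.continuousAt_rpow_const s c (Or.inl (lt_of_lt_of_le ha hs.1).ne')).continuousWithinAt
  have hcontP : ContinuousOn (fun s : ℝ => (a ^ al - s ^ al)/(L*al)) (Set.Icc a b) :=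
    ((continuousOn_const.sub (hrpow al)).div_const _)
  have hcontQ : ContinuousOn (fun s : ℝ => (s ^ al - b ^ al)/(L*al)) (Set.Icc a b) :=
    (((hrpow al).sub continuousOn_const).div_const _)
  induction M with
  | zero => simp
  | succ M ih =>
    set P : ℝ → ℝ := fun s => (a ^ al - s ^ al)/(L*al) with hP
    set Q : ℝ → ℝ := fun s => (s ^ al - b ^ al)/(L*al) with hQ
    have hc0 : ((Nat.factorial M : ℝ)) ≠ 0 := Nat.cast_ne_zero.mpr (Nat.factorial_ne_zero M)
    have hc1 : ((Nat.factorial (M+1) : ℝ)) ≠ 0 := Nat.cast_ne_zero.mpr (Nat.factorial_ne_zero _)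
    have hfacs : ((Nat.factorial (M+1) : ℝ)) = (M+1) * (Nat.factorial M : ℝ) := by
      rw [Nat.factorial_succ]; push_cast; ring
    -- derivative of P and Q on Icc
    have hs0 : ∀ s ∈ Set.Icc a b, 0 < s := fun s hs => lt_of_lt_of_le ha hs.1
    have hPder : ∀ s ∈ Set.Icc a b, HasDerivAt P (-(s ^ (al-1) / L)) s := by
      intro s hs
      have h1 : HasDerivAt (fun s : ℝ => s ^ al) (al * s ^ (al-1)) s :=
        Real.hasDerivAt_rpow_const (Or.inl (hs0 s hs).ne')
      have h2 := ((hasDerivAt_const s (a ^ al)).sub h1).div_const (L*al)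
      refine h2.congr_deriv ?_
      field_simp
      ring
    have hQder : ∀ s ∈ Set.Icc a b, HasDerivAt Q (s ^ (al-1) / L) s := by
      intro s hs
      have h1 : HasDerivAt (fun s : ℝ => s ^ al) (al * s ^ (al-1)) s :=
        Real.hasDerivAt_rpow_const (Or.inl (hs0 s hs).ne')
      have h2 := (h1.sub (hasDerivAt_const s (b ^ al))).div_const (L*al)
      refine h2.congr_deriv ?_
      field_simp
      ring
    -- integrand continuity / integrability
    have hintm : ∀ m : ℕ, m ≤ M + 1 → IntervalIntegrable
        (fun s => (F m s / (Nat.factorial m : ℝ)) * P s ^ m * s ^ (al-1)) volume a b := by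
      intro m hm
      apply ContinuousOn.intervalIntegrable
      rw [huIcc]
      exact (((hc m hm).div_const _).mul (hcontP.pow m)).mul (hrpow (al-1))
    have hintQ : IntervalIntegrable (fun s => (F M b / (Nat.factorial M : ℝ)) * Q s ^ M * s ^ (al-1))
        volume a b := by
      apply ContinuousOn.intervalIntegrable
      rw [huIcc]
      exact ((continuousOn_const.mul (hcontQ.pow M)).mul (hrpow (al-1)))
    have hintR : ∀ m : ℕ, IntervalIntegrable (fun s => (F 0 s - ∑ k ∈ Finset.range m,
        (F k b / (Nat.factorial k : ℝ)) * Q s ^ k) * s ^ (al-1)) volume a b := by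
      intro m
      apply ContinuousOn.intervalIntegrable
      rw [huIcc]
      refine ((hc 0 (Nat.zero_le _)).sub ?_).mul (hrpow (al-1))
      apply continuousOn_finset_sum
      intro k _
      exact continuousOn_const.mul (hcontQ.pow k)
    -- FTC computation 1 : the step on the LHS
    have hPa : P a = 0 := by simp [hP]
    have ftc1 : (∫ s in a..b, (F (M+1) s * P s ^ (M+1) / (Nat.factorial (M+1) : ℝ)
        - F M s * P s ^ M / (Nat.factorial M : ℝ)) * s ^ (al-1) / L)
        = F M b * P b ^ (M+1) / (Nat.factorial (M+1) : ℝ) := by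
      have := intervalIntegral.integral_eq_sub_of_hasDerivAt (a := a) (b := b)
        (f := fun s => F M s * P s ^ (M+1) / (Nat.factorial (M+1) : ℝ))
        (f' := fun s => (F (M+1) s * P s ^ (M+1) / (Nat.factorial (M+1) : ℝ)
          - F M s * P s ^ M / (Nat.factorial M : ℝ)) * s ^ (al-1) / L)
        ?_ ?_
      · rw [this, hPa]
        simp
      · intro s hs
        rw [huIcc] at hs
        have hF := hder M (Nat.lt_succ_self M) s hs
        have hpow := (hPder s hs).pow (M+1)
        have h := (hF.mul hpow).div_const ((Nat.factorial (M+1) : ℝ))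
        refine h.congr_deriv ?_
        simp only [Nat.add_sub_cancel]
        rw [hfacs]
        simp only [Pi.pow_apply, Pi.mul_apply]
        push_cast
        field_simp
        ring
      · apply ContinuousOn.intervalIntegrable
        rw [huIcc]
        refine ContinuousOn.div_const ?_ L
        refine ContinuousOn.mul ?_ (hrpow (al-1))
        exact (((hc (M+1) le_rfl).mul (hcontP.pow (M+1))).div_const _).sub
          (((hc M (Nat.le_succ M)).mul (hcontP.pow M)).div_const _)
    -- FTC computation 2 : the step on the RHS
    have hQb : Q b = 0 := by simp [hQ]
    have hQa : Q a = P b := rfl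
    have ftc2 : (∫ s in a..b, Q s ^ M * s ^ (al-1)) = - (L * P b ^ (M+1) / (M+1)) := by
      have := intervalIntegral.integral_eq_sub_of_hasDerivAt (a := a) (b := b)
        (f := fun s => L * Q s ^ (M+1) / (M+1))
        (f' := fun s => Q s ^ M * s ^ (al-1)) ?_ ?_
      · rw [this, hQb, hQa]
        simp
      · intro s hs
        rw [huIcc] at hs
        have hpow := (hQder s hs).pow (M+1)
        have h := (hpow.const_mul L).div_const ((M:ℝ)+1)
        refine h.congr_deriv ?_
        simp only [Nat.add_sub_cancel]
        push_cast
        have : ((M:ℝ)+1) ≠ 0 := by positivity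
        field_simp
      · apply ContinuousOn.intervalIntegrable
        rw [huIcc]
        exact (hcontQ.pow M).mul (hrpow (al-1))
    -- combine
    have lhs_step : (∫ s in a..b, (F (M+1) s / (Nat.factorial (M+1) : ℝ)) * P s ^ (M+1) * s ^ (al-1))
        = (∫ s in a..b, (F M s / (Nat.factorial M : ℝ)) * P s ^ M * s ^ (al-1))
          + L * (F M b * P b ^ (M+1) / (Nat.factorial (M+1) : ℝ)) := by
      have heq : ∀ s : ℝ, (F (M+1) s / (Nat.factorial (M+1) : ℝ)) * P s ^ (M+1) * s ^ (al-1)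
          = (F M s / (Nat.factorial M : ℝ)) * P s ^ M * s ^ (al-1)
            + L * ((F (M+1) s * P s ^ (M+1) / (Nat.factorial (M+1) : ℝ)
              - F M s * P s ^ M / (Nat.factorial M : ℝ)) * s ^ (al-1) / L) := by
        intro s
        field_simp
        ring
      rw [intervalIntegral.integral_congr (fun s _ => heq s)]
      have hint2 : IntervalIntegrable (fun s => L * ((F (M+1) s * P s ^ (M+1) / (Nat.factorial (M+1) : ℝ)
          - F M s * P s ^ M / (Nat.factorial M : ℝ)) * s ^ (al-1) / L)) volume a b := by
        apply IntervalIntegrable.const_mul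
        apply ContinuousOn.intervalIntegrable
        rw [huIcc]
        refine ContinuousOn.div_const ?_ L
        refine ContinuousOn.mul ?_ (hrpow (al-1))
        exact (((hc (M+1) le_rfl).mul (hcontP.pow (M+1))).div_const _).sub
          (((hc M (Nat.le_succ M)).mul (hcontP.pow M)).div_const _)
      rw [intervalIntegral.integral_add (hintm M (Nat.le_succ M)) hint2,
        intervalIntegral.integral_const_mul, ftc1]
    have rhs_step : (∫ s in a..b, (F 0 s - ∑ k ∈ Finset.range (M+1),
          (F k b / (Nat.factorial k : ℝ)) * Q s ^ k) * s ^ (al-1))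
        = (∫ s in a..b, (F 0 s - ∑ k ∈ Finset.range M,
          (F k b / (Nat.factorial k : ℝ)) * Q s ^ k) * s ^ (al-1))
          + L * (F M b * P b ^ (M+1) / (Nat.factorial (M+1) : ℝ)) := by
      have heq : ∀ s : ℝ, (F 0 s - ∑ k ∈ Finset.range (M+1),
          (F k b / (Nat.factorial k : ℝ)) * Q s ^ k) * s ^ (al-1)
          = (F 0 s - ∑ k ∈ Finset.range M, (F k b / (Nat.factorial k : ℝ)) * Q s ^ k) * s ^ (al-1)
            - (F M b / (Nat.factorial M : ℝ)) * Q s ^ M * s ^ (al-1) := by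
        intro s
        rw [Finset.sum_range_succ]
        ring
      rw [intervalIntegral.integral_congr (fun s _ => heq s)]
      rw [intervalIntegral.integral_sub (hintR M) ?_]
      · have : (∫ s in a..b, (F M b / (Nat.factorial M : ℝ)) * Q s ^ M * s ^ (al-1))
            = (F M b / (Nat.factorial M : ℝ)) * ∫ s in a..b, Q s ^ M * s ^ (al-1) := by
          rw [← intervalIntegral.integral_const_mul]
          congr 1
          funext s
          ring
        rw [this, ftc2, hfacs]
        field_simp
        ring
      · have h2 : (fun s => (F M b / (Nat.factorial M : ℝ)) * Q s ^ M * s ^ (al-1))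
            = (fun s => (F M b / (Nat.factorial M : ℝ)) * (Q s ^ M * s ^ (al-1))) := by
          funext s; ring
        rw [h2]
        apply IntervalIntegrable.const_mul
        apply ContinuousOn.intervalIntegrable
        rw [huIcc]
        exact (hcontQ.pow M).mul (hrpow (al-1))
    rw [lhs_step, rhs_step, ih (fun k hk => hder k (hk.trans (Nat.lt_succ_self M)))
      (fun k hk => hc k (hk.trans (Nat.le_succ M)))]

theorem stmt5 (γ β ρ δ p q α : ℝ) (hγ : 0 < γ) (hβ : 0 < β) (hρ : 0 < ρ) (hδ : 0 < δ)
    (hp : 0 < p) (hq : 0 < q) (hα : 0 < α) (hα1 : α ≤ 1)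
    (a b : ℝ) (ha : 0 < a) (hab : a ≤ b)
    (n : ℤ) (hn : -1 ≤ n)
    (f : ℝ → ℝ)
    (hdiff : alphaDiff γ β ρ δ p q α (n + 1).toNat f)
    (hcont : ContinuousOn ((Dal γ β ρ δ p q α)^[(n + 1).toNat] f) (Set.Ioi 0)) :
    VInt γ β ρ δ p q α a b (fun s =>
        ((Dal γ β ρ δ p q α)^[(n + 1).toNat] f s / (Nat.factorial (n + 1).toNat : ℝ)) *
          ((a ^ α - s ^ α) / (vlam γ β ρ δ p q * α)) ^ (n + 1).toNat) =
      VInt γ β ρ δ p q α a b (fun s => Rtay γ β ρ δ p q α (n + 1).toNat f b s) := by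
  have hL : 0 < vlam γ β ρ δ p q := by
    have h1 : 0 < poch ρ q := div_pos (Real.Gamma_pos_of_pos (by linarith)) (Real.Gamma_pos_of_pos hρ)
    have h2 : 0 < poch δ p := div_pos (Real.Gamma_pos_of_pos (by linarith)) (Real.Gamma_pos_of_pos hδ)
    exact div_pos (mul_pos (Real.Gamma_pos_of_pos hβ) h1)
      (mul_pos (Real.Gamma_pos_of_pos (by linarith)) h2)
  set M := (n + 1).toNat with hM
  set L := vlam γ β ρ δ p q with hLdef
  set F : ℕ → ℝ → ℝ := fun k => (Dal γ β ρ δ p q α)^[k] f with hF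
  have hIccsub : Set.Icc a b ⊆ Set.Ioi 0 := fun s hs => lt_of_lt_of_le ha hs.1
  have hder : ∀ k, k < M → ∀ s ∈ Set.Icc a b, HasDerivAt (F k) (F (k+1) s * s ^ (α-1) / L) s := by
    intro k hk s hs
    have hs0 : 0 < s := hIccsub hs
    have hd : DifferentiableAt ℝ (F k) s :=
      (hdiff k hk).differentiableAt (isOpen_Ioi.mem_nhds hs0)
    have h1 : HasDerivAt (F k) (deriv (F k) s) s := hd.hasDerivAt
    have hexp : F (k+1) s * s ^ (α-1) / L = deriv (F k) s := by
      have hFk1 : F (k+1) s = L * s ^ (1-α) * deriv (F k) s := by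
        show (Dal γ β ρ δ p q α)^[k+1] f s
            = L * s ^ (1-α) * deriv ((Dal γ β ρ δ p q α)^[k] f) s
        rw [Function.iterate_succ_apply']
        rfl
      rw [hFk1]
      have hone : s ^ (1-α) * s ^ (α-1) = 1 := by
        rw [← Real.rpow_add hs0]
        norm_num
      calc L * s ^ (1-α) * deriv (F k) s * s ^ (α-1) / L
          = (s ^ (1-α) * s ^ (α-1)) * deriv (F k) s * (L / L) := by ring
        _ = deriv (F k) s := by rw [hone, div_self hL.ne']; ring
    exact hexp ▸ h1
  have hc : ∀ k, k ≤ M → ContinuousOn (F k) (Set.Icc a b) := by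
    intro k hk
    rcases eq_or_lt_of_le hk with h | h
    · subst h
      exact hcont.mono hIccsub
    · exact ((hdiff k h).continuousOn).mono hIccsub
  have := key_taylor L α a b hL hα ha hab M F hder hc
  exact congrArg (fun z : ℝ => (vlam γ β ρ δ p q)⁻¹ * z) this
end

section
/- Let 0 < a ≤ b, let n ≥ −1 be an integer, and let f : (0,∞) → ℝ be (n+1) times α-differentiable with D_α^{n+1} f continuous on (0,∞). Then ∫_a^b (D_α^{n+1} f(s)/(n+1)!)·((b^α − s^α)/(λα))^{n+1} dωs = ∫_a^b R_{n,f}(a,s) dωs. -/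
open Real Set MeasureTheory Filter

lemma core (L α : ℝ) (hL : L ≠ 0) (hα : α ≠ 0)
    (a b : ℝ) (ha : 0 < a) (hab : a ≤ b) :
    ∀ (m : ℕ) (G : ℕ → ℝ → ℝ),
      (∀ k < m, ∀ x ∈ Set.Ioi (0:ℝ), HasDerivAt (G k) (x ^ (α - 1) / L * G (k+1) x) x) →
      (∀ k ≤ m, ContinuousOn (G k) (Set.Ioi 0)) →
      (∫ s in a..b, (G m s / (Nat.factorial m : ℝ)) * ((b ^ α - s ^ α) / (L * α)) ^ m * s ^ (α - 1)) =
        ∫ s in a..b, (G 0 s - ∑ k ∈ Finset.range m,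
            (G k a / (Nat.factorial k : ℝ)) * ((s ^ α - a ^ α) / (L * α)) ^ k) * s ^ (α - 1) := by
  intro m
  induction m with
  | zero => intro G _ _; simp
  | succ m ih =>
    intro G hder hcont
    have hsub : Set.uIcc a b ⊆ Set.Ioi (0:ℝ) := by
      rw [Set.uIcc_of_le hab]
      exact fun x hx => lt_of_lt_of_le ha hx.1
    have hm1 : ((m:ℝ) + 1) ≠ 0 := by positivity
    have hfacne : ((Nat.factorial m : ℝ)) ≠ 0 := Nat.cast_ne_zero.mpr (Nat.factorial_ne_zero m)
    have hrp : ContinuousOn (fun x : ℝ => x ^ (α - 1)) (Set.uIcc a b) :=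
      ContinuousOn.rpow_const continuousOn_id (fun x hx => Or.inl (ne_of_gt (hsub hx)))
    have hrpα : ContinuousOn (fun x : ℝ => x ^ α) (Set.uIcc a b) :=
      ContinuousOn.rpow_const continuousOn_id (fun x hx => Or.inl (ne_of_gt (hsub hx)))
    -- derivative of v = W^(m+1)
    have hvat : ∀ x ∈ Set.uIcc a b, HasDerivAt (fun s : ℝ => ((b ^ α - s ^ α) / (L * α)) ^ (m+1))
        (((m:ℝ)+1) * ((b ^ α - x ^ α) / (L * α)) ^ m * (-(α * x ^ (α-1)) / (L * α))) x := by
      intro x hx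
      have h1 : HasDerivAt (fun s : ℝ => s ^ α) (α * x ^ (α - 1)) x :=
        Real.hasDerivAt_rpow_const (Or.inl (ne_of_gt (hsub hx)))
      have h2 : HasDerivAt (fun s : ℝ => (b ^ α - s ^ α) / (L * α)) (-(α * x ^ (α-1)) / (L*α)) x := by
        simpa [neg_div] using (((hasDerivAt_const x (b ^ α)).sub h1).div_const (L*α))
      have h3 := h2.fun_pow (m+1)
      simpa using h3
    have hu : ∀ x ∈ Set.uIcc a b, HasDerivAt (G m) (x ^ (α - 1) / L * G (m+1) x) x :=
      fun x hx => hder m (Nat.lt_succ_self m) x (hsub hx)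
    have hu'cont : ContinuousOn (fun x : ℝ => x ^ (α - 1) / L * G (m+1) x) (Set.uIcc a b) :=
      (hrp.div_const L).mul ((hcont (m+1) le_rfl).mono hsub)
    have hWcont : ContinuousOn (fun x : ℝ => ((b ^ α - x ^ α) / (L * α)) ^ m) (Set.uIcc a b) :=
      ((continuousOn_const.sub hrpα).div_const (L*α)).pow m
    have hv'cont : ContinuousOn (fun x : ℝ => ((m:ℝ)+1) * ((b ^ α - x ^ α) / (L * α)) ^ m *
        (-(α * x ^ (α-1)) / (L * α))) (Set.uIcc a b) :=
      (continuousOn_const.mul hWcont).mul ((continuousOn_const.mul hrp).neg.div_const (L*α))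
    have hibp := intervalIntegral.integral_mul_deriv_eq_deriv_mul hu hvat
      hu'cont.intervalIntegrable hv'cont.intervalIntegrable
    -- rewrite LHS of hibp as constant times A
    have hA : (∫ x in a..b, G m x * (((m:ℝ)+1) * ((b ^ α - x ^ α) / (L * α)) ^ m *
          (-(α * x ^ (α-1)) / (L * α))))
        = (-((m:ℝ)+1) / L) * ∫ s in a..b, G m s * (((b ^ α - s ^ α) / (L * α)) ^ m * s ^ (α-1)) := by
      rw [← intervalIntegral.integral_const_mul]
      refine intervalIntegral.integral_congr fun x hx => ?_
      field_simp
    have hvb : ((b ^ α - b ^ α) / (L * α) : ℝ) ^ (m+1) = 0 := by simp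
    rw [hA] at hibp
    simp only [hvb, mul_zero, zero_sub] at hibp
    -- hibp : (-(m+1)/L) * A = -(G m a * va) - B
    -- IH
    have hih := ih G (fun k hk => hder k (Nat.lt_succ_of_lt hk) )
      (fun k hk => hcont k (hk.trans (Nat.le_succ m)))
    -- A' = (m!)⁻¹ A
    have hA' : (∫ s in a..b, (G m s / (Nat.factorial m : ℝ)) * ((b ^ α - s ^ α) / (L * α)) ^ m * s ^ (α - 1))
        = ((Nat.factorial m : ℝ))⁻¹ * ∫ s in a..b, G m s * (((b ^ α - s ^ α) / (L * α)) ^ m * s ^ (α-1)) := by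
      rw [← intervalIntegral.integral_const_mul]
      refine intervalIntegral.integral_congr fun x hx => ?_
      field_simp
    -- FTC computation of E
    have hQ : ∀ x ∈ Set.uIcc a b, HasDerivAt (fun s : ℝ => L / ((m:ℝ)+1) * ((s ^ α - a ^ α) / (L * α)) ^ (m+1))
        (((x ^ α - a ^ α) / (L * α)) ^ m * x ^ (α - 1)) x := by
      intro x hx
      have h1 : HasDerivAt (fun s : ℝ => s ^ α) (α * x ^ (α - 1)) x :=
        Real.hasDerivAt_rpow_const (Or.inl (ne_of_gt (hsub hx)))
      have h2 := ((h1.sub_const (a ^ α)).div_const (L * α)).fun_pow (m+1)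
      have h3 := h2.const_mul (L / ((m:ℝ)+1))
      refine h3.congr_deriv ?_
      push_cast
      field_simp
    have hQcont : ContinuousOn (fun x : ℝ => ((x ^ α - a ^ α) / (L * α)) ^ m * x ^ (α - 1)) (Set.uIcc a b) :=
      (((hrpα.sub continuousOn_const).div_const (L*α)).pow m).mul hrp
    have hE := intervalIntegral.integral_eq_sub_of_hasDerivAt hQ hQcont.intervalIntegrable
    simp only [sub_self, zero_div, zero_pow (Nat.succ_ne_zero m), mul_zero, sub_zero] at hE
    -- split RHS
    have hsumcont : ContinuousOn (fun s : ℝ => G 0 s - ∑ k ∈ Finset.range m,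
        (G k a / (Nat.factorial k : ℝ)) * ((s ^ α - a ^ α) / (L * α)) ^ k) (Set.uIcc a b) := by
      refine ((hcont 0 (Nat.zero_le _)).mono hsub).sub ?_
      refine continuousOn_finset_sum _ fun k _ => ?_
      exact continuousOn_const.mul (((hrpα.sub continuousOn_const).div_const (L*α)).pow k)
    have hRHS : (∫ s in a..b, (G 0 s - ∑ k ∈ Finset.range (m+1),
            (G k a / (Nat.factorial k : ℝ)) * ((s ^ α - a ^ α) / (L * α)) ^ k) * s ^ (α - 1))
        = (∫ s in a..b, (G 0 s - ∑ k ∈ Finset.range m,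
            (G k a / (Nat.factorial k : ℝ)) * ((s ^ α - a ^ α) / (L * α)) ^ k) * s ^ (α - 1))
          - (G m a / (Nat.factorial m : ℝ)) *
            ∫ s in a..b, ((s ^ α - a ^ α) / (L * α)) ^ m * s ^ (α - 1) := by
      rw [← intervalIntegral.integral_const_mul,
        ← intervalIntegral.integral_sub ((hsumcont.fun_mul hrp).intervalIntegrable)
          ((continuousOn_const.fun_mul hQcont).intervalIntegrable)]
      refine intervalIntegral.integral_congr fun x hx => ?_
      simp only [Finset.sum_range_succ]
      ring
    -- assemble
    have hLHS : (∫ s in a..b, (G (m+1) s / (Nat.factorial (m+1) : ℝ)) *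
          ((b ^ α - s ^ α) / (L * α)) ^ (m+1) * s ^ (α - 1))
        = (L / (Nat.factorial (m+1) : ℝ)) *
          ∫ x in a..b, (x ^ (α - 1) / L * G (m+1) x) * ((b ^ α - x ^ α) / (L * α)) ^ (m+1) := by
      rw [← intervalIntegral.integral_const_mul]
      refine intervalIntegral.integral_congr fun x hx => ?_
      field_simp
    rw [hLHS, hRHS, hE, ← hih, hA']
    have hfac : (Nat.factorial (m+1) : ℝ) = ((m:ℝ)+1) * (Nat.factorial m : ℝ) := by
      push_cast [Nat.factorial_succ]; ring
    rw [hfac]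
    set A := ∫ s in a..b, G m s * (((b ^ α - s ^ α) / (L * α)) ^ m * s ^ (α-1)) with hAdef
    -- hibp : (-(m+1)/L) * A = -(G m a * va) - B
    have hB : (∫ x in a..b, (x ^ (α - 1) / L * G (m+1) x) * ((b ^ α - x ^ α) / (L * α)) ^ (m+1))
        = -(G m a * ((b ^ α - a ^ α) / (L * α)) ^ (m+1)) + (((m:ℝ)+1)/L) * A := by
      linear_combination hibp
    rw [hB]
    field_simp
    ring

theorem stmt6 (γ β ρ δ p q α : ℝ) (hγ : 0 < γ) (hβ : 0 < β) (hρ : 0 < ρ) (hδ : 0 < δ)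
    (hp : 0 < p) (hq : 0 < q) (hα : 0 < α) (hα1 : α ≤ 1)
    (a b : ℝ) (ha : 0 < a) (hab : a ≤ b)
    (n : ℤ) (hn : -1 ≤ n)
    (f : ℝ → ℝ)
    (hdiff : alphaDiff γ β ρ δ p q α (n + 1).toNat f)
    (hcont : ContinuousOn ((Dal γ β ρ δ p q α)^[(n + 1).toNat] f) (Set.Ioi 0)) :
    VInt γ β ρ δ p q α a b (fun s =>
        ((Dal γ β ρ δ p q α)^[(n + 1).toNat] f s / (Nat.factorial (n + 1).toNat : ℝ)) *
          ((b ^ α - s ^ α) / (vlam γ β ρ δ p q * α)) ^ (n + 1).toNat) =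
      VInt γ β ρ δ p q α a b (fun s => Rtay γ β ρ δ p q α (n + 1).toNat f a s) := by
  have hL : 0 < vlam γ β ρ δ p q := by
    unfold vlam poch
    have h1 := Real.Gamma_pos_of_pos hβ
    have h2 := Real.Gamma_pos_of_pos (add_pos hρ hq)
    have h3 := Real.Gamma_pos_of_pos hρ
    have h4 := Real.Gamma_pos_of_pos (add_pos hγ hβ)
    have h5 := Real.Gamma_pos_of_pos (add_pos hδ hp)
    have h6 := Real.Gamma_pos_of_pos hδ
    positivity
  set m := (n + 1).toNat with hm
  have hrel : ∀ k < m, ∀ x ∈ Set.Ioi (0:ℝ),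
      HasDerivAt ((Dal γ β ρ δ p q α)^[k] f)
        (x ^ (α - 1) / (vlam γ β ρ δ p q) * (Dal γ β ρ δ p q α)^[k+1] f x) x := by
    intro k hk x hx
    have hx0 : (0:ℝ) < x := hx
    have hd : DifferentiableAt ℝ ((Dal γ β ρ δ p q α)^[k] f) x :=
      (hdiff k hk).differentiableAt (isOpen_Ioi.mem_nhds hx)
    have h1 := hd.hasDerivAt
    have h2 : (Dal γ β ρ δ p q α)^[k+1] f x =
        vlam γ β ρ δ p q * x ^ (1 - α) * deriv ((Dal γ β ρ δ p q α)^[k] f) x := by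
      rw [Function.iterate_succ_apply']; rfl
    rw [h2]
    refine h1.congr_deriv ?_
    have hc : x ^ (α - 1) * x ^ (1 - α) = 1 := by
      rw [← Real.rpow_add hx0]; norm_num
    set d := deriv ((Dal γ β ρ δ p q α)^[k] f) x
    have : x ^ (α-1) / vlam γ β ρ δ p q * (vlam γ β ρ δ p q * x ^ (1-α) * d)
        = (x ^ (α-1) * x ^ (1-α)) * d * (vlam γ β ρ δ p q / vlam γ β ρ δ p q) := by ring
    rw [this, hc, div_self (ne_of_gt hL), mul_one, one_mul]
  have hcontk : ∀ k ≤ m, ContinuousOn ((Dal γ β ρ δ p q α)^[k] f) (Set.Ioi 0) := by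
    intro k hk
    rcases lt_or_eq_of_le hk with h | h
    · exact (hdiff k h).continuousOn
    · exact h ▸ hcont
  have key := core (vlam γ β ρ δ p q) α (ne_of_gt hL) (ne_of_gt hα) a b ha hab m
    (fun k => (Dal γ β ρ δ p q α)^[k] f) hrel hcontk
  unfold VInt
  refine congrArg _ ?_
  simp only [Function.iterate_zero, id] at key
  simp only [Rtay]
  exact key
end

section
/- (The truncated V-fractional derivative of a differentiable function.) Let f : (0,∞) → ℝ be differentiable at t > 0. Then the limit lim_{ε→0} (f(t · ᵢH(ε t^{−α})) − f(t))/ε exists and equals λ · t^{1−α} · f′(t), where λ = Γ(β)(ρ)_q/(Γ(γ+β)(δ)_p). -/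
open Real Set MeasureTheory Filter

/-- Truncated six-parameter Mittag-Leffler-type function. -/
noncomputable def iH (γ β ρ δ p q : ℝ) (i : ℕ) (z : ℝ) : ℝ :=
  Real.Gamma β * ∑ k ∈ Finset.range (i + 1),
    (poch ρ (q * (k : ℝ)) / poch δ (p * (k : ℝ))) * z ^ k / Real.Gamma (γ * (k : ℝ) + β)

theorem stmt18 (γ β ρ δ p q α : ℝ) (hγ : 0 < γ) (hβ : 0 < β) (hρ : 0 < ρ) (hδ : 0 < δ)
    (hp : 0 < p) (hq : 0 < q) (hα : 0 < α) (hα1 : α ≤ 1)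
    (i : ℕ) (hi : 1 ≤ i) (t : ℝ) (ht : 0 < t)
    (f : ℝ → ℝ) (hf : DifferentiableAt ℝ f t) :
    Filter.Tendsto
      (fun ε : ℝ => (f (t * iH γ β ρ δ p q i (ε * t ^ (-α))) - f t) / ε)
      (nhdsWithin 0 {0}ᶜ)
      (nhds (vlam γ β ρ δ p q * t ^ (1 - α) * deriv f t)) := by
  have hΓβ : Real.Gamma β ≠ 0 := (Real.Gamma_pos_of_pos hβ).ne'
  have hpoch : ∀ x : ℝ, 0 < x → poch x 0 = 1 := fun x hx => by
    simp [poch, div_self (Real.Gamma_pos_of_pos hx).ne']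
  set c := t ^ (-α) with hc
  have hsum : HasDerivAt (fun ε : ℝ => iH γ β ρ δ p q i (ε * c))
      (vlam γ β ρ δ p q * c) 0 := by
    have h : HasDerivAt (fun ε : ℝ => iH γ β ρ δ p q i (ε * c))
        (Real.Gamma β * ∑ k ∈ Finset.range (i + 1),
          (poch ρ (q * (k : ℝ)) / poch δ (p * (k : ℝ))) *
            ((k : ℝ) * ((0:ℝ) * c) ^ (k - 1) * (1 * c)) / Real.Gamma (γ * (k : ℝ) + β)) 0 := by
      unfold iH
      exact HasDerivAt.const_mul _ (HasDerivAt.fun_sum fun k _ =>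
        ((((hasDerivAt_id (0:ℝ)).mul_const c).pow k).const_mul _).div_const _)
    convert h using 1
    rw [Finset.sum_eq_single 1]
    · simp only [Nat.cast_one, mul_one, pow_zero, one_mul]
      rw [vlam]; ring
    · intro k hk hne
      rcases k with _ | _ | m
      · simp
      · exact absurd rfl hne
      · simp [zero_pow]
    · intro h1; exact absurd (Finset.mem_range.mpr (by omega)) h1
  have hg : HasDerivAt (fun ε : ℝ => t * iH γ β ρ δ p q i (ε * c))
      (t * (vlam γ β ρ δ p q * c)) 0 := hsum.const_mul t
  have hg0 : t * iH γ β ρ δ p q i (0 * c) = t := by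
    rw [zero_mul, iH, Finset.sum_eq_single 0]
    · simp [hpoch ρ hρ, hpoch δ hδ, hΓβ]
    · intro k _ hk; simp [zero_pow hk]
    · intro h1; exact absurd (Finset.mem_range.mpr (by omega)) h1
  have hF : HasDerivAt (fun ε : ℝ => f (t * iH γ β ρ δ p q i (ε * c)))
      (deriv f t * (t * (vlam γ β ρ δ p q * c))) 0 := by
    have hf' : HasDerivAt f (deriv f t) (t * iH γ β ρ δ p q i (0 * c)) := by
      rw [hg0]; exact hf.hasDerivAt
    exact hf'.comp 0 hg
  have htc : t * c = t ^ (1 - α) := by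
    rw [hc, show (1:ℝ) - α = 1 + (-α) by ring, Real.rpow_add ht, Real.rpow_one]
  rw [hasDerivAt_iff_tendsto_slope] at hF
  have : deriv f t * (t * (vlam γ β ρ δ p q * c)) =
      vlam γ β ρ δ p q * t ^ (1 - α) * deriv f t := by
    rw [← htc]; ring
  rw [this] at hF
  have hg0' : t * iH γ β ρ δ p q i 0 = t := by rw [zero_mul] at hg0; exact hg0
  refine hF.congr fun ε => ?_
  simp [slope, hg0', div_eq_inv_mul]
end
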